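/- There exists an associative dialgebra D and elements a, b ∈ D such that the quasi-Jordan product a·b := a ⊣ b + b ⊢ a does NOT satisfy the left quasi-Jordan identity, i.e. (a·a)·(a·b) ≠ a·((a·a)·b). -/

import Mathlib

/-- A bundled associative dialgebra over ℤ: an additive abelian group with two
biadditive operations `l` (⊣) and `r` (⊢) satisfying the five dialgebra axioms. -/
structure Dialgebra where
  carrier : Type
  [grp : AddCommGroup carrier]
  l : carrier → carrier → carrier
  r : carrier → carrier → carrier
  l_add_left : ∀ a b c, l (a + b) c = l a c + l b c
  l_add_right : ∀ a b c, l a (b + c) = l a b + l a c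
  r_add_left : ∀ a b c, r (a + b) c = r a c + r b c
  r_add_right : ∀ a b c, r a (b + c) = r a b + r a c
  ax1 : ∀ a b c, l (l a b) c = l a (l b c)
  ax2 : ∀ a b c, r (r a b) c = r a (r b c)
  ax3 : ∀ a b c, l (r a b) c = r a (l b c)
  ax4 : ∀ a b c, r (r a b) c = r (l a b) c
  ax5 : ∀ a b c, l a (l b c) = l a (r b c)

attribute [instance] Dialgebra.grp

/-- The quasi-Jordan product in a bundled dialgebra. -/
def Dialgebra.q (D : Dialgebra) (a b : D.carrier) : D.carrier := D.l a b + D.r b a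

/-- Concrete dialgebra: upper-triangular 2×2 integer matrices `(a11, a12, a22)`,
with `a ⊣ b = a * π b` and `a ⊢ b = π a * b` where `π` projects onto the diagonal. -/
def exD : Dialgebra where
  carrier := ℤ × ℤ × ℤ
  l a b := (a.1 * b.1, a.2.1 * b.2.2, a.2.2 * b.2.2)
  r a b := (a.1 * b.1, a.1 * b.2.1, a.2.2 * b.2.2)
  l_add_left a b c := by simp [Prod.ext_iff]; ring_nf; simp [add_mul]
  l_add_right a b c := by simp [Prod.ext_iff]; ring_nf; simp [mul_add]
  r_add_left a b c := by simp [Prod.ext_iff]; ring_nf; simp [add_mul]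
  r_add_right a b c := by simp [Prod.ext_iff]; ring_nf; simp [mul_add]
  ax1 a b c := by simp [Prod.ext_iff]; ring_nf; simp [mul_assoc]
  ax2 a b c := by simp [Prod.ext_iff]; ring_nf; simp [mul_assoc]
  ax3 a b c := by simp [Prod.ext_iff]; ring_nf; simp [mul_assoc]
  ax4 a b c := by simp [Prod.ext_iff]
  ax5 a b c := by simp [Prod.ext_iff]

theorem quasiJordan_not_left_quasi_jordan :
    ∃ (D : Dialgebra) (a b : D.carrier),
      D.q (D.q a a) (D.q a b) ≠ D.q a (D.q (D.q a a) b) := by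
  refine ⟨exD, ((1 : ℤ), (1 : ℤ), (0 : ℤ)), ((1 : ℤ), (0 : ℤ), (0 : ℤ)), ?_⟩
  simp [Dialgebra.q, exD, Prod.ext_iff]
  decide
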